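/- arXiv:2212.07031 — 2 statements merged into one kernel-verified Lean document; each statement's English description precedes it below -/
import Mathlib

section
/- Let ν be a Borel measure on (0,∞), β > 0 and c₀ ≥ 0 such that ∫_{(0,∞)} s dν(s) ≤ c₀ and ∫_{(z,∞)} s dν(s) ≤ c₀ (ln(1+z))^{−β} for every z ≥ 1. Then for every σ ∈ (0, β) there is a constant C depending only on c₀, β, σ such that ∫_{(0,∞)} s (ln(1+s))^σ dν(s) ≤ C. -/
open MeasureTheory Real
open scoped ENNReal

noncomputable section

set_option maxHeartbeats 1000000 in
/-- if `∫ s dν ≤ c₀` and `∫_{(z,∞)} s dν ≤ c₀ (ln(1+z))^{−β}` for `z ≥ 1`,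
then for every `σ ∈ (0, β)` one has `∫ s (ln(1+s))^σ dν ≤ C` with `C = C(c₀, β, σ)`. -/
theorem stmt_17 (β c₀ σ : ℝ) (hβ : 0 < β) (hc₀ : 0 ≤ c₀) (hσ : σ ∈ Set.Ioo (0:ℝ) β) :
    ∃ C : ℝ, ∀ ν : Measure ℝ,
      (∫⁻ s in Set.Ioi (0:ℝ), ENNReal.ofReal s ∂ν) ≤ ENNReal.ofReal c₀ →
      (∀ z : ℝ, 1 ≤ z →
        (∫⁻ s in Set.Ioi z, ENNReal.ofReal s ∂ν)
          ≤ ENNReal.ofReal (c₀ * Real.log (1 + z) ^ (-β))) →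
      (∫⁻ s in Set.Ioi (0:ℝ), ENNReal.ofReal (s * Real.log (1 + s) ^ σ) ∂ν)
        ≤ ENNReal.ofReal C := by
  obtain ⟨hσ0, hσβ⟩ := hσ
  set r : ℝ := (2:ℝ) ^ (σ - β) with hr_def
  have hr0 : 0 < r := Real.rpow_pos_of_pos (by norm_num) _
  have hr1 : r < 1 := Real.rpow_lt_one_of_one_lt_of_neg (by norm_num) (by linarith)
  refine ⟨c₀ + c₀ * 2 ^ σ * (1 - r)⁻¹, fun ν h0 h1 => ?_⟩
  -- the cut points
  set z : ℕ → ℝ := fun n => Real.exp ((2:ℝ) ^ n) - 1 with hz_def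
  have hlog : ∀ n, Real.log (1 + z n) = (2:ℝ) ^ n := by
    intro n
    simp [hz_def, Real.log_exp, add_sub_cancel]
  have hz1 : ∀ n, (1:ℝ) ≤ z n := by
    intro n
    have h2 : (1:ℝ) ≤ (2:ℝ) ^ n := one_le_pow₀ one_le_two
    have := Real.add_one_le_exp ((2:ℝ) ^ n)
    simp only [hz_def]
    linarith
  have hz0 : ∀ n, (0:ℝ) < z n := fun n => lt_of_lt_of_le one_pos (hz1 n)
  -- the pieces
  set T : ℕ → Set ℝ := fun n => Set.Ioc (z n) (z (n+1)) with hT_def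
  -- covering
  have hcover : Set.Ioi (0:ℝ) ⊆ Set.Ioc 0 (z 0) ∪ ⋃ n, T n := by
    intro s hs
    have hs0 : (0:ℝ) < s := hs
    have hex : ∃ n, s ≤ z n := by
      obtain ⟨n, hn⟩ := pow_unbounded_of_one_lt (s + 1) (one_lt_two (α := ℝ))
      refine ⟨n, ?_⟩
      have := Real.add_one_le_exp ((2:ℝ) ^ n)
      simp only [hz_def]
      linarith
    have hfind := Nat.find_spec hex
    rcases n0 : Nat.find hex with _ | m
    · exact Or.inl ⟨hs0, by rw [n0] at hfind; exact hfind⟩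
    · refine Or.inr (Set.mem_iUnion.2 ⟨m, ?_⟩)
      have hlt : ¬ s ≤ z m := Nat.find_min hex (by omega)
      rw [n0] at hfind
      exact ⟨lt_of_not_ge hlt, hfind⟩
  -- bound on piece 0
  have hb0 : (∫⁻ s in Set.Ioc 0 (z 0), ENNReal.ofReal (s * Real.log (1 + s) ^ σ) ∂ν) ≤ ENNReal.ofReal c₀ := by
    calc (∫⁻ s in Set.Ioc 0 (z 0), ENNReal.ofReal (s * Real.log (1 + s) ^ σ) ∂ν)
        ≤ ∫⁻ s in Set.Ioc 0 (z 0), ENNReal.ofReal s ∂ν := by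
          refine lintegral_mono_ae ((ae_restrict_iff' measurableSet_Ioc).2 (ae_of_all _ ?_))
          intro s hs
          refine ENNReal.ofReal_le_ofReal ?_
          have hlog_le : Real.log (1 + s) ≤ 1 := by
            have := Real.log_le_log (by linarith [hs.1]) (by linarith [hs.2] : 1 + s ≤ 1 + z 0)
            rw [hlog 0] at this; simpa using this
          have hlog_nn : 0 ≤ Real.log (1 + s) :=
            Real.log_nonneg (by linarith [hs.1])
          have : Real.log (1 + s) ^ σ ≤ 1 := Real.rpow_le_one hlog_nn hlog_le hσ0.le
          calc s * Real.log (1 + s) ^ σ ≤ s * 1 := by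
                exact mul_le_mul_of_nonneg_left this hs.1.le
            _ = s := mul_one s
      _ ≤ ∫⁻ s in Set.Ioi (0:ℝ), ENNReal.ofReal s ∂ν :=
          lintegral_mono_set Set.Ioc_subset_Ioi_self
      _ ≤ ENNReal.ofReal c₀ := h0
  -- bound on piece n+1
  have hbn : ∀ n : ℕ, (∫⁻ s in T n, ENNReal.ofReal (s * Real.log (1 + s) ^ σ) ∂ν)
      ≤ ENNReal.ofReal (c₀ * 2 ^ σ) * (ENNReal.ofReal r) ^ n := by
    intro n
    have hpow_nn : (0:ℝ) ≤ ((2:ℝ) ^ (n+1)) ^ σ := Real.rpow_nonneg (by positivity) _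
    calc (∫⁻ s in T n, ENNReal.ofReal (s * Real.log (1 + s) ^ σ) ∂ν)
        ≤ ∫⁻ s in T n, ENNReal.ofReal (((2:ℝ) ^ (n+1)) ^ σ) * ENNReal.ofReal s ∂ν := by
          rw [hT_def]
          refine lintegral_mono_ae ((ae_restrict_iff' measurableSet_Ioc).2 (ae_of_all _ ?_))
          intro s hs
          rw [← ENNReal.ofReal_mul hpow_nn]
          refine ENNReal.ofReal_le_ofReal ?_
          have hsp : (0:ℝ) < s := lt_trans (hz0 n) hs.1
          have hlog_le : Real.log (1 + s) ≤ (2:ℝ) ^ (n+1) := by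
            have := Real.log_le_log (by linarith) (by linarith [hs.2] : 1 + s ≤ 1 + z (n+1))
            rw [hlog (n+1)] at this; exact this
          have hlog_nn : 0 ≤ Real.log (1 + s) := Real.log_nonneg (by linarith)
          have hle : Real.log (1 + s) ^ σ ≤ ((2:ℝ) ^ (n+1)) ^ σ :=
            Real.rpow_le_rpow hlog_nn hlog_le hσ0.le
          calc s * Real.log (1 + s) ^ σ ≤ s * ((2:ℝ) ^ (n+1)) ^ σ :=
                mul_le_mul_of_nonneg_left hle hsp.le
            _ = ((2:ℝ) ^ (n+1)) ^ σ * s := mul_comm _ _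
      _ = ENNReal.ofReal (((2:ℝ) ^ (n+1)) ^ σ) * ∫⁻ s in T n, ENNReal.ofReal s ∂ν :=
          lintegral_const_mul' _ _ ENNReal.ofReal_ne_top
      _ ≤ ENNReal.ofReal (((2:ℝ) ^ (n+1)) ^ σ) * ∫⁻ s in Set.Ioi (z n), ENNReal.ofReal s ∂ν := by
          refine mul_le_mul_right ?_ _
          rw [hT_def]
          exact lintegral_mono_set Set.Ioc_subset_Ioi_self
      _ ≤ ENNReal.ofReal (((2:ℝ) ^ (n+1)) ^ σ) * ENNReal.ofReal (c₀ * Real.log (1 + z n) ^ (-β)) :=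
          mul_le_mul_right (h1 (z n) (hz1 n)) _
      _ = ENNReal.ofReal (c₀ * 2 ^ σ) * (ENNReal.ofReal r) ^ n := by
          rw [← ENNReal.ofReal_pow hr0.le, ← ENNReal.ofReal_mul hpow_nn,
            ← ENNReal.ofReal_mul (by positivity)]
          congr 1
          rw [hlog n, ← Real.rpow_natCast (2:ℝ) (n+1), ← Real.rpow_natCast (2:ℝ) n,
            ← Real.rpow_mul (by norm_num : (0:ℝ) ≤ 2),
            ← Real.rpow_mul (by norm_num : (0:ℝ) ≤ 2),
            hr_def, ← Real.rpow_natCast ((2:ℝ) ^ (σ - β)) n,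
            ← Real.rpow_mul (by norm_num : (0:ℝ) ≤ 2)]
          push_cast
          rw [show ((n:ℝ)+1)*σ = σ + ((n:ℝ)*σ + (n:ℝ)*(-β)) - (n:ℝ)*(-β) by ring,
            show (σ-β)*(n:ℝ) = (n:ℝ)*σ + (n:ℝ)*(-β) by ring]
          rw [sub_eq_add_neg, Real.rpow_add (by norm_num : (0:ℝ) < 2),
            Real.rpow_add (by norm_num : (0:ℝ) < 2), Real.rpow_neg (by norm_num : (0:ℝ) ≤ 2)]
          field_simp
  -- put things together
  calc (∫⁻ s in Set.Ioi (0:ℝ), ENNReal.ofReal (s * Real.log (1 + s) ^ σ) ∂ν)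
      ≤ ∫⁻ s in Set.Ioc 0 (z 0) ∪ ⋃ n, T n, ENNReal.ofReal (s * Real.log (1 + s) ^ σ) ∂ν :=
        lintegral_mono_set hcover
    _ ≤ (∫⁻ s in Set.Ioc 0 (z 0), ENNReal.ofReal (s * Real.log (1 + s) ^ σ) ∂ν)
        + ∫⁻ s in ⋃ n, T n, ENNReal.ofReal (s * Real.log (1 + s) ^ σ) ∂ν :=
        lintegral_union_le _ _ _
    _ ≤ ENNReal.ofReal c₀ + ∑' n, ∫⁻ s in T n, ENNReal.ofReal (s * Real.log (1 + s) ^ σ) ∂ν :=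
        add_le_add hb0 (lintegral_iUnion_le _ _)
    _ ≤ ENNReal.ofReal c₀ + ∑' n : ℕ, ENNReal.ofReal (c₀ * 2 ^ σ) * (ENNReal.ofReal r) ^ n :=
        add_le_add_right (ENNReal.tsum_le_tsum hbn) _
    _ = ENNReal.ofReal c₀ + ENNReal.ofReal (c₀ * 2 ^ σ) * (1 - ENNReal.ofReal r)⁻¹ := by
        rw [ENNReal.tsum_mul_left, ENNReal.tsum_geometric]
    _ = ENNReal.ofReal (c₀ + c₀ * 2 ^ σ * (1 - r)⁻¹) := by
        rw [← ENNReal.ofReal_one, ← ENNReal.ofReal_sub _ hr0.le,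
          ← ENNReal.ofReal_inv_of_pos (by linarith),
          ← ENNReal.ofReal_mul (mul_nonneg hc₀ (Real.rpow_nonneg (by norm_num) _)),
          ← ENNReal.ofReal_add hc₀ (mul_nonneg (mul_nonneg hc₀ (Real.rpow_nonneg (by norm_num) _)) (inv_nonneg.2 (by linarith)))]
end
end

section
/- Let C > 5, c₁ > 0, R ∈ (0, e^{−1}), k ≥ 0 and μ ∈ (0, C). Let Γ, F : (0,R] → ℝ satisfy |Γ(r)| ≤ k |ln r|^{−μ} and |F(r)| ≤ c₁ √r for all r ∈ (0,R]. Let W : [0,R] → [0,∞) be absolutely continuous with W(R) ≤ c₁ and suppose that (r |ln r| / C) W′(r) − W(r) ≥ −Γ(r) − F(r) for almost every r ∈ (0,R]. Then there exists a constant c₂, depending only on C, c₁, R and μ, such that W(r) ≤ c₂ ( |ln r|^{−C} + k |ln r|^{−μ} ) for all r ∈ (0,R]. -/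
open MeasureTheory Real
open scoped ENNReal

noncomputable section



lemma fubini_step {f φ' : ℝ → ℝ} {a b : ℝ} (hab : a ≤ b)
    (hf : IntegrableOn f (Set.Ioc a b))
    (hφ' : IntegrableOn φ' (Set.Ioc a b)) :
    ∫ s in Set.Ioc a b, φ' s * (∫ t in Set.Ioc a s, f t) =
    ∫ t in Set.Ioc a b, (∫ s in Set.Ioc t b, φ' s) * f t := by
  set μ := volume.restrict (Set.Ioc a b) with hμ
  have hG : Integrable (fun p : ℝ × ℝ => φ' p.1 * f p.2) (μ.prod μ) := Integrable.mul_prod hφ' hf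
  have hT : MeasurableSet {p : ℝ × ℝ | p.2 ≤ p.1} :=
    measurableSet_le measurable_snd measurable_fst
  have hind : (fun p : ℝ × ℝ => if p.2 ≤ p.1 then φ' p.1 * f p.2 else 0)
      = {p : ℝ × ℝ | p.2 ≤ p.1}.indicator (fun p => φ' p.1 * f p.2) := by
    funext p; by_cases h : p.2 ≤ p.1 <;> simp [Set.indicator, h]
  have hF : Integrable (fun p : ℝ × ℝ => if p.2 ≤ p.1 then φ' p.1 * f p.2 else 0) (μ.prod μ) := by
    rw [hind]; exact hG.indicator hT
  have swap := MeasureTheory.integral_integral_swap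
    (f := fun s t => if t ≤ s then φ' s * f t else 0) hF
  have hL : ∀ s ∈ Set.Ioc a b,
      (∫ t, (if t ≤ s then φ' s * f t else 0) ∂μ) = φ' s * ∫ t in Set.Ioc a s, f t := by
    intro s hs
    have h1 : (fun t => if t ≤ s then φ' s * f t else 0)
        = (Set.Iic s).indicator (fun t => φ' s * f t) := by
      funext t; by_cases h : t ≤ s <;> simp [Set.indicator, h]
    rw [h1, hμ, integral_indicator measurableSet_Iic,
      Measure.restrict_restrict measurableSet_Iic]
    have h2 : Set.Iic s ∩ Set.Ioc a b = Set.Ioc a s := by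
      ext t; simp only [Set.mem_inter_iff, Set.mem_Iic, Set.mem_Ioc]
      constructor
      · rintro ⟨h3, h4, h5⟩; exact ⟨h4, h3⟩
      · rintro ⟨h3, h4⟩; exact ⟨h4, h3, h4.trans hs.2⟩
    rw [h2, integral_const_mul]
  have hRt : ∀ t ∈ Set.Ioc a b,
      (∫ s, (if t ≤ s then φ' s * f t else 0) ∂μ) = (∫ s in Set.Ioc t b, φ' s) * f t := by
    intro t ht
    have h1 : (fun s => if t ≤ s then φ' s * f t else 0)
        = (Set.Ici t).indicator (fun s => φ' s * f t) := by
      funext s; by_cases h : t ≤ s <;> simp [Set.indicator, h]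
    rw [h1, hμ, integral_indicator measurableSet_Ici,
      Measure.restrict_restrict measurableSet_Ici]
    have h2 : Set.Ici t ∩ Set.Ioc a b = Set.Icc t b := by
      ext s; simp only [Set.mem_inter_iff, Set.mem_Ici, Set.mem_Ioc, Set.mem_Icc]
      constructor
      · rintro ⟨h3, h4, h5⟩; exact ⟨h3, h5⟩
      · rintro ⟨h3, h4⟩; exact ⟨h3, ht.1.trans_le h3, h4⟩
    rw [h2, integral_Icc_eq_integral_Ioc, integral_mul_const]
  calc ∫ s in Set.Ioc a b, φ' s * (∫ t in Set.Ioc a s, f t)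
      = ∫ s, (∫ t, (if t ≤ s then φ' s * f t else 0) ∂μ) ∂μ := by
        rw [hμ]
        exact setIntegral_congr_fun measurableSet_Ioc (fun s hs => (hL s hs).symm)
    _ = ∫ t, (∫ s, (if t ≤ s then φ' s * f t else 0) ∂μ) ∂μ := swap
    _ = ∫ t in Set.Ioc a b, (∫ s in Set.Ioc t b, φ' s) * f t := by
        rw [hμ]
        exact setIntegral_congr_fun measurableSet_Ioc (fun t ht => hRt t ht)

lemma ibp_primitive {f φ φ' W : ℝ → ℝ} {a b : ℝ} (hab : a ≤ b)
    (hf : IntervalIntegrable f volume a b)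
    (hφ : ∀ x ∈ Set.Icc a b, HasDerivAt φ (φ' x) x)
    (hφ' : ContinuousOn φ' (Set.Icc a b))
    (hW : ∀ x ∈ Set.Icc a b, W x = W a + ∫ t in a..x, f t) :
    φ b * W b - φ a * W a = ∫ s in a..b, (φ s * f s + φ' s * W s) := by
  have huIcc : Set.uIcc a b = Set.Icc a b := Set.uIcc_of_le hab
  have hφc : ContinuousOn φ (Set.Icc a b) := fun x hx =>
    (hφ x hx).continuousAt.continuousWithinAt
  have hprimc : ContinuousOn (fun x => ∫ t in a..x, f t) (Set.Icc a b) := by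
    have := intervalIntegral.continuousOn_primitive_interval' (a := a) (b₁ := a) (b₂ := b) hf
      (by rw [huIcc]; exact Set.left_mem_Icc.2 hab)
    rwa [huIcc] at this
  have hWc : ContinuousOn W (Set.Icc a b) := by
    refine ContinuousOn.congr ((continuousOn_const (c := W a)).add hprimc) ?_
    intro x hx; exact hW x hx
  have hφ'int : IntervalIntegrable φ' volume a b :=
    (hφ'.mono (by rw [huIcc] : Set.uIcc a b ⊆ Set.Icc a b)).intervalIntegrable
  have h1 : IntervalIntegrable (fun s => φ s * f s) volume a b :=
    hf.continuousOn_mul (by rw [huIcc]; exact hφc)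
  have h2 : IntervalIntegrable (fun s => φ' s * W s) volume a b := by
    apply ContinuousOn.intervalIntegrable
    rw [huIcc]; exact hφ'.mul hWc
  -- FTC for φ' on subinterval [t, b]
  have hftc : ∀ t ∈ Set.Icc a b, ∫ s in Set.Ioc t b, φ' s = φ b - φ t := by
    intro t ht
    have hsub : Set.uIcc t b ⊆ Set.Icc a b := by
      rw [Set.uIcc_of_le ht.2]
      exact Set.Icc_subset_Icc ht.1 le_rfl
    have := intervalIntegral.integral_eq_sub_of_hasDerivAt
      (f := φ) (f' := φ') (a := t) (b := b)
      (fun x hx => hφ x (hsub hx))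
      ((hφ'.mono hsub).intervalIntegrable)
    rw [intervalIntegral.integral_of_le ht.2] at this
    exact this
  -- Fubini step
  have hfub : ∫ s in a..b, φ' s * (∫ t in a..s, f t)
      = φ b * (∫ t in a..b, f t) - ∫ t in a..b, φ t * f t := by
    rw [intervalIntegral.integral_of_le hab]
    have e1 : ∫ s in Set.Ioc a b, φ' s * (∫ t in a..s, f t)
        = ∫ s in Set.Ioc a b, φ' s * (∫ t in Set.Ioc a s, f t) := by
      refine setIntegral_congr_fun measurableSet_Ioc (fun s hs => ?_)
      rw [intervalIntegral.integral_of_le hs.1.le]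
    have e2 := fubini_step (f := f) (φ' := φ') hab hf.1
      ((hφ'.integrableOn_compact isCompact_Icc).mono_set Set.Ioc_subset_Icc_self)
    have e3 : ∫ t in Set.Ioc a b, (∫ s in Set.Ioc t b, φ' s) * f t
        = ∫ t in Set.Ioc a b, (φ b * f t - φ t * f t) := by
      refine setIntegral_congr_fun measurableSet_Ioc (fun t ht => ?_)
      rw [hftc t ⟨ht.1.le, ht.2⟩]; ring
    rw [e1, e2, e3]
    have hbf : IntegrableOn (fun t => φ b * f t) (Set.Ioc a b) := hf.1.const_mul _
    have hpf : IntegrableOn (fun t => φ t * f t) (Set.Ioc a b) := h1.1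
    rw [integral_sub hbf hpf, integral_const_mul]
    rw [intervalIntegral.integral_of_le hab, intervalIntegral.integral_of_le hab]
  -- expand W inside the integral
  have hsplit : ∫ s in a..b, (φ s * f s + φ' s * W s)
      = (∫ s in a..b, φ s * f s) + ((W a) * (φ b - φ a) + (φ b * (∫ t in a..b, f t)
          - ∫ t in a..b, φ t * f t)) := by
    rw [intervalIntegral.integral_add h1 h2]
    congr 1
    have e0 : ∫ s in a..b, φ' s * W s = ∫ s in a..b, (W a * φ' s + φ' s * (∫ t in a..s, f t)) := by
      refine intervalIntegral.integral_congr (fun s hs => ?_)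
      rw [huIcc] at hs
      rw [hW s hs]; ring
    rw [e0]
    have h3 : IntervalIntegrable (fun s => W a * φ' s) volume a b := hφ'int.const_mul _
    have h4 : IntervalIntegrable (fun s => φ' s * (∫ t in a..s, f t)) volume a b := by
      apply ContinuousOn.intervalIntegrable
      rw [huIcc]; exact hφ'.mul hprimc
    rw [intervalIntegral.integral_add h3 h4, hfub, intervalIntegral.integral_const_mul]
    congr 1
    have := intervalIntegral.integral_eq_sub_of_hasDerivAt
      (f := φ) (f' := φ') (a := a) (b := b)
      (fun x hx => hφ x (by rwa [huIcc] at hx)) hφ'int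
    rw [this]
  rw [hsplit]
  have hWb : W b = W a + ∫ t in a..b, f t := hW b (Set.right_mem_Icc.2 hab)
  have hIf : ∫ t in a..b, f t = W b - W a := by rw [hWb]; ring
  rw [hIf]
  ring

lemma hasDerivAt_negLog_rpow (p : ℝ) {s : ℝ} (hs0 : 0 < s) (hs1 : s < 1) :
    HasDerivAt (fun x => (-Real.log x) ^ p) (-s⁻¹ * p * (-Real.log s) ^ (p - 1)) s := by
  have hlog : Real.log s < 0 := Real.log_neg hs0 hs1
  have h1 : HasDerivAt (fun x : ℝ => -Real.log x) (-s⁻¹) s :=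
    (Real.hasDerivAt_log hs0.ne').neg
  exact h1.rpow_const (Or.inl (by simp only [neg_ne_zero]; exact hlog.ne))

lemma negLog_rpow_le (p : ℝ) (hp : 0 ≤ p) {s : ℝ} (hs0 : 0 < s) (hs1 : s < 1) :
    (-Real.log s) ^ p ≤ (1 + 4 ^ (⌈p⌉₊) * (Nat.factorial ⌈p⌉₊ : ℝ)) * s ^ (-(4⁻¹ : ℝ)) := by
  set n : ℕ := ⌈p⌉₊ with hn
  set t : ℝ := -Real.log s with htdef
  have hlog : Real.log s < 0 := Real.log_neg hs0 hs1
  have ht0 : 0 < t := by simp only [htdef, neg_pos]; exact hlog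
  have hs4 : s ^ (-(4⁻¹ : ℝ)) = Real.exp (t / 4) := by
    rw [Real.rpow_def_of_pos hs0]
    congr 1
    simp only [htdef]; ring
  have hM1 : (1 : ℝ) ≤ 1 + 4 ^ n * (n.factorial : ℝ) := by
    have : (0:ℝ) ≤ 4 ^ n * (n.factorial : ℝ) := by positivity
    linarith
  rw [hs4]
  have hexp1 : (1 : ℝ) ≤ Real.exp (t / 4) := Real.one_le_exp (by positivity)
  rcases le_or_gt t 1 with ht1 | ht1
  · have : t ^ p ≤ 1 := Real.rpow_le_one ht0.le ht1 hp
    calc t ^ p ≤ 1 := this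
      _ ≤ (1 + 4 ^ n * (n.factorial : ℝ)) * Real.exp (t / 4) := by nlinarith
  · have h2 : t ^ p ≤ t ^ (n : ℝ) :=
      Real.rpow_le_rpow_of_exponent_le ht1.le (Nat.le_ceil p)
    have h3 : t ^ (n : ℝ) = t ^ n := Real.rpow_natCast t n
    have h4 : (t / 4) ^ n ≤ (n.factorial : ℝ) * Real.exp (t / 4) := by
      have := Real.pow_div_factorial_le_exp (x := t / 4) (by positivity) n
      have hfac : (0 : ℝ) < (n.factorial : ℝ) := by positivity
      rw [div_le_iff₀ hfac] at this
      linarith [this]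
    have h5 : t ^ n = 4 ^ n * (t / 4) ^ n := by
      rw [← mul_pow, mul_div_cancel₀ t (by norm_num : (4:ℝ) ≠ 0)]
    calc t ^ p ≤ t ^ (n : ℝ) := h2
      _ = t ^ n := h3
      _ = 4 ^ n * (t / 4) ^ n := h5
      _ ≤ 4 ^ n * ((n.factorial : ℝ) * Real.exp (t / 4)) := by
          apply mul_le_mul_of_nonneg_left h4 (by positivity)
      _ ≤ (1 + 4 ^ n * (n.factorial : ℝ)) * Real.exp (t / 4) := by nlinarith

set_option maxHeartbeats 2000000 in
/-- a degenerate differential inequality. If `W` is absolutely continuous on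
`[0,R]` (encoded as the integral of an integrable `W'`), nonnegative, `W(R) ≤ c₁`, and
`(r|ln r|/C) W'(r) − W(r) ≥ −Γ(r) − F(r)` a.e., with `|Γ(r)| ≤ k |ln r|^{−μ}` and
`|F(r)| ≤ c₁ √r`, then `W(r) ≤ c₂ (|ln r|^{−C} + k |ln r|^{−μ})` on `(0,R]`, where `c₂`
depends only on `C, c₁, R, μ`. -/
theorem stmt_18 (C c₁ R μ : ℝ) (hC : 5 < C) (hc₁ : 0 < c₁)
    (hR : R ∈ Set.Ioo (0:ℝ) (Real.exp (-1))) (hμ : μ ∈ Set.Ioo (0:ℝ) C) :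
    ∃ c₂ : ℝ, ∀ (k : ℝ), 0 ≤ k → ∀ (Γ F W W' : ℝ → ℝ),
      (∀ r ∈ Set.Ioc (0:ℝ) R, |Γ r| ≤ k * |Real.log r| ^ (-μ)) →
      (∀ r ∈ Set.Ioc (0:ℝ) R, |F r| ≤ c₁ * Real.sqrt r) →
      (∀ r ∈ Set.Icc (0:ℝ) R, 0 ≤ W r) →
      W R ≤ c₁ →
      IntervalIntegrable W' volume 0 R →
      (∀ x ∈ Set.Icc (0:ℝ) R, W x = W 0 + ∫ s in (0:ℝ)..x, W' s) →
      (∀ᵐ r ∂(volume.restrict (Set.Ioc (0:ℝ) R)),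
        (r * |Real.log r| / C) * W' r - W r ≥ -(Γ r) - F r) →
      ∀ r ∈ Set.Ioc (0:ℝ) R, W r ≤ c₂ * (|Real.log r| ^ (-C) + k * |Real.log r| ^ (-μ)) := by
  obtain ⟨hR0, hRe⟩ := hR
  obtain ⟨hμ0, hμC⟩ := hμ
  have hC0 : 0 < C := by linarith
  have hCμ : 0 < C - μ := by linarith
  have hR1 : R < 1 := by
    have h1 : Real.exp (-1) < 1 := by
      rw [show (1:ℝ) = Real.exp 0 from (Real.exp_zero).symm]
      exact Real.exp_lt_exp.mpr (by norm_num)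
    linarith
  have hlogR : Real.log R < -1 := by
    have := Real.log_lt_log hR0 hRe
    rwa [Real.log_exp] at this
  set n : ℕ := ⌈C - 1⌉₊ with hn
  set M : ℝ := 1 + 4 ^ n * (Nat.factorial n : ℝ) with hM
  have hM0 : 0 < M := by positivity
  refine ⟨max (c₁ * (-Real.log R) ^ C + 4 * (C * c₁ * M)) (C / (C - μ)), ?_⟩
  intro k hk Γ F W W' hΓ hF hWpos hWR hW'int hWint hae r hrmem
  set c₂ : ℝ := max (c₁ * (-Real.log R) ^ C + 4 * (C * c₁ * M)) (C / (C - μ)) with hc₂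
  obtain ⟨hr0, hrR⟩ := hrmem
  have hr1 : r < 1 := lt_of_le_of_lt hrR hR1
  have hlogr : Real.log r < 0 := Real.log_neg hr0 hr1
  have hLpos : ∀ s : ℝ, 0 < s → s ≤ R → 1 < -Real.log s := by
    intro s h1 h2
    have := Real.log_le_log h1 h2
    linarith
  have hLr1 : 1 < -Real.log r := hLpos r hr0 hrR
  have hLr0 : 0 < -Real.log r := by linarith
  -- W agrees with its primitive from r on [r, R]
  have hsubint : ∀ x : ℝ, 0 ≤ x → x ≤ R → IntervalIntegrable W' volume 0 x := by
    intro x h1 h2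
    refine hW'int.mono_set ?_
    rw [Set.uIcc_of_le h1, Set.uIcc_of_le hR0.le]
    exact Set.Icc_subset_Icc le_rfl h2
  have hWr : ∀ x ∈ Set.Icc r R, W x = W r + ∫ t in r..x, W' t := by
    intro x hx
    have hx0 : (0:ℝ) ≤ x := le_trans hr0.le hx.1
    have h1 := hWint x ⟨hx0, hx.2⟩
    have h2 := hWint r ⟨hr0.le, hrR⟩
    have h3 := intervalIntegral.integral_interval_sub_left
      (hsubint x hx0 hx.2) (hsubint r hr0.le hrR)
    rw [h1, h2]
    linarith [h3]
  have hfint : IntervalIntegrable W' volume r R := by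
    refine hW'int.mono_set ?_
    rw [Set.uIcc_of_le hrR, Set.uIcc_of_le hR0.le]
    exact Set.Icc_subset_Icc hr0.le le_rfl
  -- continuity facts on Icc r R
  have hIccpos : ∀ x ∈ Set.Icc r R, (0:ℝ) < x := fun x hx => lt_of_lt_of_le hr0 hx.1
  have hlogC : ContinuousOn Real.log (Set.Icc r R) :=
    Real.continuousOn_log.mono (fun x hx => by
      simp only [Set.mem_compl_iff, Set.mem_singleton_iff]
      exact (hIccpos x hx).ne')
  have hLc : ContinuousOn (fun s : ℝ => -Real.log s) (Set.Icc r R) := hlogC.neg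
  have hLne : ∀ x ∈ Set.Icc r R, -Real.log x ≠ 0 := by
    intro x hx
    have := hLpos x (hIccpos x hx) hx.2
    linarith
  have hpow : ∀ p : ℝ, ContinuousOn (fun s : ℝ => (-Real.log s) ^ p) (Set.Icc r R) :=
    fun p => hLc.rpow_const (fun x hx => Or.inl (hLne x hx))
  have hinv : ContinuousOn (fun s : ℝ => s⁻¹) (Set.Icc r R) :=
    continuousOn_id.inv₀ (fun x hx => (hIccpos x hx).ne')
  -- derivative of the weight
  have hgderiv : ∀ x ∈ Set.Icc r R,
      HasDerivAt (fun s : ℝ => (-Real.log s) ^ C) (-x⁻¹ * C * (-Real.log x) ^ (C - 1)) x :=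
    fun x hx => hasDerivAt_negLog_rpow C (hIccpos x hx) (lt_of_le_of_lt hx.2 hR1)
  have hg'cont : ContinuousOn (fun x : ℝ => -x⁻¹ * C * (-Real.log x) ^ (C - 1)) (Set.Icc r R) :=
    (hinv.neg.mul continuousOn_const).mul (hpow (C - 1))
  -- integration by parts identity
  have hkey := ibp_primitive hrR hfint hgderiv hg'cont hWr
  -- continuity of W
  have hWcont : ContinuousOn W (Set.Icc r R) := by
    have hprim : ContinuousOn (fun x => ∫ t in (0:ℝ)..x, W' t) (Set.Icc 0 R) := by
      have := intervalIntegral.continuousOn_primitive_interval' (a := (0:ℝ)) hW'int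
        (by rw [Set.uIcc_of_le hR0.le]; exact Set.left_mem_Icc.2 hR0.le)
      rwa [Set.uIcc_of_le hR0.le] at this
    have h1 : ContinuousOn W (Set.Icc 0 R) := by
      refine ContinuousOn.congr ((continuousOn_const (c := W 0)).add hprim) ?_
      intro x hx; exact hWint x hx
    exact h1.mono (Set.Icc_subset_Icc hr0.le le_rfl)
  -- the lower bound function
  set ψ : ℝ → ℝ := fun s => -(C * k * (-Real.log s) ^ (C - μ - 1) * s⁻¹)
      - C * c₁ * ((-Real.log s) ^ (C - 1) * Real.sqrt s * s⁻¹) with hψ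
  have haer : ∀ᵐ s ∂(volume.restrict (Set.Ioc r R)),
      (s * |Real.log s| / C) * W' s - W s ≥ -(Γ s) - F s :=
    ae_restrict_of_ae_restrict_of_subset (Set.Ioc_subset_Ioc_left hr0.le) hae
  have haeIcc : ψ ≤ᵐ[volume.restrict (Set.Icc r R)]
      (fun s => (-Real.log s) ^ C * W' s + -s⁻¹ * C * (-Real.log s) ^ (C - 1) * W s) := by
    rw [← Measure.restrict_congr_set Ioc_ae_eq_Icc]
    filter_upwards [haer, ae_restrict_mem measurableSet_Ioc] with s hs1 hs2
    have hs0 : 0 < s := lt_trans hr0 hs2.1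
    have hsR : s ≤ R := hs2.2
    have ht1 : 1 < -Real.log s := hLpos s hs0 hsR
    have ht0 : 0 < -Real.log s := by linarith
    have habs : |Real.log s| = -Real.log s := abs_of_neg (by linarith)
    have hΓs := hΓ s ⟨hs0, hsR⟩
    have hFs := hF s ⟨hs0, hsR⟩
    rw [habs] at hΓs hs1
    have hTL : (-Real.log s) ^ (C - 1) * (-Real.log s) = (-Real.log s) ^ C := by
      nth_rewrite 2 [show C = C - 1 + 1 from by ring]
      rw [Real.rpow_add_one ht0.ne']
    have hTμ : (-Real.log s) ^ (C - 1) * (-Real.log s) ^ (-μ) = (-Real.log s) ^ (C - μ - 1) := by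
      rw [← Real.rpow_add ht0]
      congr 1; ring
    have hsne : s ≠ 0 := hs0.ne'
    have hA : (0:ℝ) ≤ C * (-Real.log s) ^ (C - 1) * s⁻¹ := by positivity
    have eq1 : (-Real.log s) ^ C * W' s + -s⁻¹ * C * (-Real.log s) ^ (C - 1) * W s
        = (C * (-Real.log s) ^ (C - 1) * s⁻¹) * ((s * (-Real.log s) / C) * W' s - W s) := by
      rw [← hTL]
      field_simp
      ring
    have h6 : (s * (-Real.log s) / C) * W' s - W s
        ≥ -(k * (-Real.log s) ^ (-μ)) - c₁ * Real.sqrt s := by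
      have h7 := le_abs_self (Γ s)
      have h8 := le_abs_self (F s)
      linarith
    have eq2 : ψ s = (C * (-Real.log s) ^ (C - 1) * s⁻¹)
        * (-(k * (-Real.log s) ^ (-μ)) - c₁ * Real.sqrt s) := by
      simp only [hψ]
      rw [← hTμ]
      ring
    calc ψ s = (C * (-Real.log s) ^ (C - 1) * s⁻¹)
          * (-(k * (-Real.log s) ^ (-μ)) - c₁ * Real.sqrt s) := eq2
      _ ≤ (C * (-Real.log s) ^ (C - 1) * s⁻¹)
          * ((s * (-Real.log s) / C) * W' s - W s) := by
          exact mul_le_mul_of_nonneg_left h6 hA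
      _ = (-Real.log s) ^ C * W' s + -s⁻¹ * C * (-Real.log s) ^ (C - 1) * W s := eq1.symm
  -- integrability
  have hψint : IntervalIntegrable ψ volume r R := by
    apply ContinuousOn.intervalIntegrable
    rw [Set.uIcc_of_le hrR]
    exact (((continuousOn_const.mul (hpow (C - μ - 1))).mul hinv).neg).sub
      (continuousOn_const.mul (((hpow (C - 1)).mul
        (Real.continuous_sqrt.continuousOn)).mul hinv))
  have hGint : IntervalIntegrable
      (fun s => (-Real.log s) ^ C * W' s + -s⁻¹ * C * (-Real.log s) ^ (C - 1) * W s)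
      volume r R := by
    apply IntervalIntegrable.add
    · exact hfint.continuousOn_mul (by rw [Set.uIcc_of_le hrR]; exact hpow C)
    · apply ContinuousOn.intervalIntegrable
      rw [Set.uIcc_of_le hrR]
      exact (hg'cont.mul hWcont)
  have hmono := intervalIntegral.integral_mono_ae_restrict hrR hψint hGint haeIcc
  -- split ∫ψ
  have ht1int : IntervalIntegrable (fun s => C * k * (-Real.log s) ^ (C - μ - 1) * s⁻¹)
      volume r R := by
    apply ContinuousOn.intervalIntegrable
    rw [Set.uIcc_of_le hrR]
    exact (continuousOn_const.mul (hpow (C - μ - 1))).mul hinv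
  have ht2int : IntervalIntegrable
      (fun s => C * c₁ * ((-Real.log s) ^ (C - 1) * Real.sqrt s * s⁻¹)) volume r R := by
    apply ContinuousOn.intervalIntegrable
    rw [Set.uIcc_of_le hrR]
    exact continuousOn_const.mul (((hpow (C - 1)).mul
      (Real.continuous_sqrt.continuousOn)).mul hinv)
  have hψsplit : ∫ s in r..R, ψ s
      = -(∫ s in r..R, C * k * (-Real.log s) ^ (C - μ - 1) * s⁻¹)
        - ∫ s in r..R, C * c₁ * ((-Real.log s) ^ (C - 1) * Real.sqrt s * s⁻¹) := by
    have h0 : (∫ s in r..R, ψ s) = ∫ s in r..R,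
        (-(C * k * (-Real.log s) ^ (C - μ - 1) * s⁻¹)
          - C * c₁ * ((-Real.log s) ^ (C - 1) * Real.sqrt s * s⁻¹)) := rfl
    have ht1nint : IntervalIntegrable
        (fun s => -(C * k * (-Real.log s) ^ (C - μ - 1) * s⁻¹)) volume r R := by
      apply ContinuousOn.intervalIntegrable
      rw [Set.uIcc_of_le hrR]
      exact ((continuousOn_const.mul (hpow (C - μ - 1))).mul hinv).neg
    rw [h0, intervalIntegral.integral_sub ht1nint ht2int, intervalIntegral.integral_neg]
  -- bound T1
  have hT1 : (∫ s in r..R, C * k * (-Real.log s) ^ (C - μ - 1) * s⁻¹)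
      ≤ C * k / (C - μ) * (-Real.log r) ^ (C - μ) := by
    have hd : ∀ x ∈ Set.uIcc r R,
        HasDerivAt (fun s : ℝ => (-Real.log s) ^ (C - μ))
          (-x⁻¹ * (C - μ) * (-Real.log x) ^ (C - μ - 1)) x := by
      intro x hx
      rw [Set.uIcc_of_le hrR] at hx
      exact hasDerivAt_negLog_rpow (C - μ) (hIccpos x hx) (lt_of_le_of_lt hx.2 hR1)
    have hdint : IntervalIntegrable
        (fun x : ℝ => -x⁻¹ * (C - μ) * (-Real.log x) ^ (C - μ - 1)) volume r R := by
      apply ContinuousOn.intervalIntegrable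
      rw [Set.uIcc_of_le hrR]
      exact (hinv.neg.mul continuousOn_const).mul (hpow (C - μ - 1))
    have eFTC := intervalIntegral.integral_eq_sub_of_hasDerivAt hd hdint
    have hfun : (fun s : ℝ => C * k * (-Real.log s) ^ (C - μ - 1) * s⁻¹)
        = fun s : ℝ => (-(C * k / (C - μ)))
            * (-s⁻¹ * (C - μ) * (-Real.log s) ^ (C - μ - 1)) := by
      funext s
      rw [show -(C * k / (C - μ)) * (-s⁻¹ * (C - μ) * (-Real.log s) ^ (C - μ - 1))
          = (C * k / (C - μ) * (C - μ)) * ((-Real.log s) ^ (C - μ - 1) * s⁻¹) from by ring,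
        div_mul_cancel₀ _ hCμ.ne']
      ring
    rw [hfun, intervalIntegral.integral_const_mul, eFTC]
    have hLRnn : (0:ℝ) ≤ (-Real.log R) ^ (C - μ) := Real.rpow_nonneg (by linarith) _
    have hcoef : (0:ℝ) ≤ C * k / (C - μ) := by positivity
    have : -(C * k / (C - μ)) * ((-Real.log R) ^ (C - μ) - (-Real.log r) ^ (C - μ))
        = C * k / (C - μ) * ((-Real.log r) ^ (C - μ) - (-Real.log R) ^ (C - μ)) := by ring
    rw [this]
    nlinarith
  -- bound T2
  have hT2 : (∫ s in r..R, C * c₁ * ((-Real.log s) ^ (C - 1) * Real.sqrt s * s⁻¹))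
      ≤ 4 * (C * c₁ * M) := by
    have hbound : ∀ s ∈ Set.Icc r R,
        C * c₁ * ((-Real.log s) ^ (C - 1) * Real.sqrt s * s⁻¹)
        ≤ C * c₁ * (M * s ^ (-(3/4 : ℝ))) := by
      intro s hs
      have hs0 : 0 < s := hIccpos s hs
      have hs1 : s < 1 := lt_of_le_of_lt hs.2 hR1
      have h1 : (-Real.log s) ^ (C - 1) ≤ M * s ^ (-(4⁻¹ : ℝ)) := by
        rw [hM, hn]
        exact negLog_rpow_le (C - 1) (by linarith) hs0 hs1
      have h2 : Real.sqrt s * s⁻¹ = s ^ (-(2⁻¹ : ℝ)) := by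
        rw [Real.sqrt_eq_rpow, ← Real.rpow_neg_one s, ← Real.rpow_add hs0]
        congr 1; norm_num
      have h3 : s ^ (-(4⁻¹ : ℝ)) * s ^ (-(2⁻¹ : ℝ)) = s ^ (-(3/4 : ℝ)) := by
        rw [← Real.rpow_add hs0]; congr 1; norm_num
      have h4 : (-Real.log s) ^ (C - 1) * Real.sqrt s * s⁻¹ ≤ M * s ^ (-(3/4 : ℝ)) := by
        rw [mul_assoc, h2, ← h3, ← mul_assoc]
        apply mul_le_mul_of_nonneg_right h1 (Real.rpow_nonneg hs0.le _)
      apply mul_le_mul_of_nonneg_left h4 (by positivity)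
    have hbint : IntervalIntegrable (fun s : ℝ => C * c₁ * (M * s ^ (-(3/4 : ℝ)))) volume r R := by
      apply ContinuousOn.intervalIntegrable
      rw [Set.uIcc_of_le hrR]
      exact continuousOn_const.mul (continuousOn_const.mul
        (ContinuousOn.rpow_const continuousOn_id (fun x hx => Or.inl (hIccpos x hx).ne')))
    have hmono2 := intervalIntegral.integral_mono_on hrR ht2int hbint hbound
    have hFTC2 : (∫ s in r..R, s ^ (-(3/4 : ℝ))) = 4 * R ^ (4⁻¹ : ℝ) - 4 * r ^ (4⁻¹ : ℝ) := by
      have hd : ∀ x ∈ Set.uIcc r R,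
          HasDerivAt (fun s : ℝ => 4 * s ^ (4⁻¹ : ℝ)) (x ^ (-(3/4 : ℝ))) x := by
        intro x hx
        rw [Set.uIcc_of_le hrR] at hx
        have hx0 : 0 < x := hIccpos x hx
        have := (Real.hasDerivAt_rpow_const (x := x) (p := (4⁻¹ : ℝ)) (Or.inl hx0.ne')).const_mul 4
        refine this.congr_deriv ?_
        rw [show (4⁻¹ : ℝ) - 1 = -(3/4 : ℝ) from by norm_num]
        ring
      have hdint : IntervalIntegrable (fun s : ℝ => s ^ (-(3/4 : ℝ))) volume r R := by
        apply ContinuousOn.intervalIntegrable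
        rw [Set.uIcc_of_le hrR]
        exact ContinuousOn.rpow_const continuousOn_id (fun x hx => Or.inl (hIccpos x hx).ne')
      have := intervalIntegral.integral_eq_sub_of_hasDerivAt hd hdint
      rw [this]
    have hR4 : R ^ (4⁻¹ : ℝ) ≤ 1 := Real.rpow_le_one hR0.le hR1.le (by norm_num)
    have hr4 : (0:ℝ) ≤ r ^ (4⁻¹ : ℝ) := Real.rpow_nonneg hr0.le _
    calc (∫ s in r..R, C * c₁ * ((-Real.log s) ^ (C - 1) * Real.sqrt s * s⁻¹))
        ≤ ∫ s in r..R, C * c₁ * (M * s ^ (-(3/4 : ℝ))) := hmono2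
      _ = C * c₁ * M * (∫ s in r..R, s ^ (-(3/4 : ℝ))) := by
          rw [← intervalIntegral.integral_const_mul]
          congr 1; funext s; ring
      _ = C * c₁ * M * (4 * R ^ (4⁻¹ : ℝ) - 4 * r ^ (4⁻¹ : ℝ)) := by rw [hFTC2]
      _ ≤ 4 * (C * c₁ * M) := by
          have hP : (0:ℝ) ≤ C * c₁ * M := by positivity
          nlinarith [mul_le_mul_of_nonneg_left hR4 hP, mul_nonneg hP hr4]
  -- assemble
  have hgrW : (-Real.log r) ^ C * W r
      ≤ c₁ * (-Real.log R) ^ C + 4 * (C * c₁ * M)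
        + C * k / (C - μ) * (-Real.log r) ^ (C - μ) := by
    have hgR : (-Real.log R) ^ C * W R ≤ (-Real.log R) ^ C * c₁ := by
      apply mul_le_mul_of_nonneg_left hWR (Real.rpow_nonneg (by linarith) _)
    have h9 : ∫ s in r..R, ψ s ≤ (-Real.log R) ^ C * W R - (-Real.log r) ^ C * W r := by
      rw [hkey]; exact hmono
    rw [hψsplit] at h9
    nlinarith
  -- divide by (-log r)^C
  have hgr0 : (0:ℝ) < (-Real.log r) ^ C := Real.rpow_pos_of_pos hLr0 _
  have hWrle : W r ≤ (c₁ * (-Real.log R) ^ C + 4 * (C * c₁ * M)) * (-Real.log r) ^ (-C)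
      + C * k / (C - μ) * (-Real.log r) ^ (-μ) := by
    have hinvC : (-Real.log r) ^ (-C) = ((-Real.log r) ^ C)⁻¹ :=
      Real.rpow_neg hLr0.le _
    have hmix : (-Real.log r) ^ (C - μ) * (-Real.log r) ^ (-C) = (-Real.log r) ^ (-μ) := by
      rw [← Real.rpow_add hLr0]; congr 1; ring
    have h10 : W r ≤ (c₁ * (-Real.log R) ^ C + 4 * (C * c₁ * M)
        + C * k / (C - μ) * (-Real.log r) ^ (C - μ)) * (-Real.log r) ^ (-C) := by
      rw [hinvC, ← div_eq_mul_inv, le_div_iff₀ hgr0]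
      nlinarith
    calc W r ≤ (c₁ * (-Real.log R) ^ C + 4 * (C * c₁ * M)
          + C * k / (C - μ) * (-Real.log r) ^ (C - μ)) * (-Real.log r) ^ (-C) := h10
      _ = (c₁ * (-Real.log R) ^ C + 4 * (C * c₁ * M)) * (-Real.log r) ^ (-C)
          + C * k / (C - μ) * ((-Real.log r) ^ (C - μ) * (-Real.log r) ^ (-C)) := by ring
      _ = (c₁ * (-Real.log R) ^ C + 4 * (C * c₁ * M)) * (-Real.log r) ^ (-C)
          + C * k / (C - μ) * (-Real.log r) ^ (-μ) := by rw [hmix]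
  -- final bound with c₂
  have habsr : |Real.log r| = -Real.log r := abs_of_neg hlogr
  rw [habsr]
  have h11 : (c₁ * (-Real.log R) ^ C + 4 * (C * c₁ * M)) ≤ c₂ := le_max_left _ _
  have h12 : C / (C - μ) ≤ c₂ := le_max_right _ _
  have hnn1 : (0:ℝ) ≤ (-Real.log r) ^ (-C) := Real.rpow_nonneg hLr0.le _
  have hnn2 : (0:ℝ) ≤ (-Real.log r) ^ (-μ) := Real.rpow_nonneg hLr0.le _
  have h13 : C * k / (C - μ) = k * (C / (C - μ)) := by ring
  calc W r ≤ (c₁ * (-Real.log R) ^ C + 4 * (C * c₁ * M)) * (-Real.log r) ^ (-C)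
        + C * k / (C - μ) * (-Real.log r) ^ (-μ) := hWrle
    _ ≤ c₂ * (-Real.log r) ^ (-C) + c₂ * (k * (-Real.log r) ^ (-μ)) := by
        apply add_le_add
        · exact mul_le_mul_of_nonneg_right h11 hnn1
        · rw [h13, mul_comm c₂ (k * (-Real.log r) ^ (-μ))]
          rw [mul_assoc, mul_assoc]
          exact mul_le_mul_of_nonneg_left
            (mul_le_mul_of_nonneg_right h12 hnn2 |>.trans_eq (mul_comm _ _)) hk
    _ = c₂ * ((-Real.log r) ^ (-C) + k * (-Real.log r) ^ (-μ)) := by ring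
end
end
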